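/- The map K ↦ p^e(K), assigning to each K ∈ (0, 1/ln 2) the unique positive solution of K·p = log₂(1+p), is strictly decreasing. -/

import Mathlib

/-- For 0 < a < b, log(1+b)/b < log(1+a)/a, by strict concavity of log. -/
lemma log_one_add_div_strictAnti {a b : ℝ} (ha : 0 < a) (hab : a < b) :
    Real.log (1 + b) / b < Real.log (1 + a) / a := by
  have hb : 0 < b := ha.trans hab
  have ht0 : 0 < a / b := div_pos ha hb
  have ht1 : a / b < 1 := (div_lt_one hb).2 hab
  have hkey := strictConcaveOn_log_Ioi.2 (Set.mem_Ioi.2 one_pos)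
      (Set.mem_Ioi.2 (by linarith : (0:ℝ) < 1 + b)) (by linarith : (1:ℝ) ≠ 1 + b)
      (by linarith : (0:ℝ) < 1 - a / b) ht0 (by ring)
  simp only [smul_eq_mul, Real.log_one, mul_zero, zero_add] at hkey
  have heq : (1 - a / b) * 1 + a / b * (1 + b) = 1 + a := by
    field_simp; ring
  rw [heq] at hkey
  rw [div_lt_div_iff₀ hb ha]
  have hb' : b ≠ 0 := ne_of_gt hb
  calc Real.log (1 + b) * a = (a / b * Real.log (1 + b)) * b := by field_simp
    _ < Real.log (1 + a) * b := by nlinarith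
/-- The map K ↦ p^e(K), assigning to each K ∈ (0, 1/ln 2) the unique positive
solution of K·p = log₂(1+p), is strictly decreasing. -/
theorem RPE_strictAnti (K₁ K₂ p₁ p₂ : ℝ)
    (hK₁0 : 0 < K₁) (hK₁1 : K₁ < 1 / Real.log 2)
    (hK₂0 : 0 < K₂) (hK₂1 : K₂ < 1 / Real.log 2)
    (hp₁ : 0 < p₁) (hpe₁ : K₁ * p₁ = Real.logb 2 (1 + p₁))
    (hp₂ : 0 < p₂) (hpe₂ : K₂ * p₂ = Real.logb 2 (1 + p₂))
    (hlt : K₁ < K₂) : p₂ < p₁ := by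
  have hlog2 : 0 < Real.log 2 := Real.log_pos (by norm_num)
  rw [Real.logb, eq_div_iff (ne_of_gt hlog2)] at hpe₁ hpe₂
  by_contra h
  push_neg at h
  rcases eq_or_lt_of_le h with heq | hlt2
  · subst heq
    have : K₁ = K₂ := by
      have := hpe₁.trans hpe₂.symm
      have h2 : K₁ * p₁ = K₂ * p₁ := mul_right_cancel₀ (ne_of_gt hlog2) this
      exact mul_right_cancel₀ (ne_of_gt hp₁) h2
    linarith
  · have := log_one_add_div_strictAnti hp₁ hlt2
    have hK1 : K₁ = Real.log (1 + p₁) / p₁ / Real.log 2 := by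
      field_simp; linarith [hpe₁]
    have hK2 : K₂ = Real.log (1 + p₂) / p₂ / Real.log 2 := by
      field_simp; linarith [hpe₂]
    rw [hK1, hK2] at hlt
    have := (div_lt_div_iff_of_pos_right hlog2).1 hlt
    linarith
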